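/- Let n, d be positive integers and let W be a word over a linearly ordered finite alphabet. If W is 4nd-divisible in the tail sense, then either W is n-divisible in the ordinary sense or W contains a subword of the form u^d for some nonempty word u. Consequently, if W is not n-divisible in the ordinary sense and contains no d-th power of a subword, then W is not 4nd-divisible in the tail sense. -/

import Mathlib

open List

/-- `W` is `m`-divisible in the ordinary sense. -/
def IsNDivisible {α : Type*} [LinearOrder α] (m : ℕ) (W : List α) : Prop :=
  ∃ (v : List α) (us : List (List α)), us.length = m ∧ (∀ u ∈ us, u ≠ []) ∧
    W = v ++ us.flatten ∧ us.Chain' (fun a b => b < a)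

/-- `W` is `m`-divisible in the tail sense: there are `m` suffixes of `W`, with strictly
increasing starting positions, that are strictly lexicographically decreasing. -/
def IsTailNDivisible {α : Type*} [LinearOrder α] (m : ℕ) (W : List α) : Prop :=
  ∃ p : Fin m → ℕ, StrictMono p ∧ (∀ i, p i < W.length) ∧
    ∀ i j : Fin m, i < j → W.drop (p j) < W.drop (p i)


namespace Stmt3Aux

variable {α : Type*} [LinearOrder α]

lemma prefix_le {u v : List α} (h : u <+: v) : u ≤ v := by
  obtain ⟨t, rfl⟩ := h
  induction u with
  | nil => exact (by intro l; cases l with | nil => exact le_rfl | cons b t => exact le_of_lt List.Lex.nil : ∀ l : List α, [] ≤ l) _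
  | cons a u ih => exact List.cons_le_cons a ih

lemma take_mono_lex (k : ℕ) {u v : List α} (h : u ≤ v) : u.take k ≤ v.take k := by
  rcases lt_or_eq_of_le h with h' | rfl
  · clear h
    replace h' : List.Lex (· < ·) u v := h'
    induction h' generalizing k with
    | nil => rw [List.take_nil]; exact (by intro l; cases l with | nil => exact le_rfl | cons b t => exact le_of_lt List.Lex.nil : ∀ l : List α, [] ≤ l) _
    | @cons a l₁ l₂ h ih =>
      cases k with
      | zero => simp
      | succ k =>
        simp only [List.take_succ_cons]
        exact List.cons_le_cons a (ih k)
    | @rel a l₁ b l₂ h =>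
      cases k with
      | zero => simp
      | succ k =>
        simp only [List.take_succ_cons]
        exact le_of_lt (List.Lex.rel h)
  · exact le_rfl

lemma lt_take {u v : List α} (h : v < u) :
    ∀ k : ℕ, v.take k ≠ u.take k → v < u.take k := by
  replace h : List.Lex (· < ·) v u := h
  induction h with
  | @nil b l =>
    intro k hne
    cases k with
    | zero => simp at hne
    | succ k =>
      simp only [List.take_nil, List.take_succ_cons]
      exact List.nil_lt_cons _ _
  | @cons a l₁ l₂ h ih =>
    intro k hne
    cases k with
    | zero => simp at hne
    | succ k =>
      simp only [List.take_succ_cons] at hne ⊢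
      have hne' : l₁.take k ≠ l₂.take k := fun hx => hne (by rw [hx])
      exact List.Lex.cons (ih k hne')
  | @rel a l₁ b l₂ h =>
    intro k hne
    cases k with
    | zero => simp at hne
    | succ k =>
      simp only [List.take_succ_cons]
      exact List.Lex.rel h

lemma pow_prefix : ∀ (e : ℕ) (B v : List α), B ≠ [] →
    v.take (e * B.length) = (B ++ v).take (e * B.length) →
    (List.replicate (e + 1) B).flatten <+: B ++ v := by
  intro e
  induction e with
  | zero =>
    intro B v _ _
    simpa using List.prefix_append B v
  | succ e ih =>
    intro B v hB h
    have hL1 : 1 ≤ B.length := List.length_pos_iff.mpr hB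
    have hvlen : (e + 1) * B.length ≤ v.length := by
      by_contra hc
      push_neg at hc
      have h1 := congrArg List.length h
      rw [List.length_take, List.length_take, List.length_append] at h1
      have h2 : 0 < (e + 1) * B.length := Nat.mul_pos (Nat.succ_pos e) hL1
      omega
    have harith : (e + 1) * B.length = B.length + e * B.length := by ring
    have hsplit : (B ++ v).take ((e + 1) * B.length) = B ++ v.take (e * B.length) := by
      rw [harith, List.take_append, List.take_of_length_le (by omega), Nat.add_sub_cancel_left]
    rw [hsplit] at h
    have hBpre : v.take B.length = B := by
      have h2 := congrArg (List.take B.length) h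
      rw [List.take_take] at h2
      have hmin : B.length ⊓ ((e + 1) * B.length) = B.length := by
        have : B.length ≤ (e + 1) * B.length := Nat.le_mul_of_pos_left _ (Nat.succ_pos e)
        omega
      rw [hmin, List.take_left] at h2
      exact h2
    have hvsplit : v = B ++ v.drop B.length := by
      conv_lhs => rw [← List.take_append_drop B.length v]
      rw [hBpre]
    have hdrop : (v.drop B.length).take (e * B.length) = v.take (e * B.length) := by
      have h2 := congrArg (List.drop B.length) h
      rw [List.drop_take, List.drop_left] at h2
      have : (e + 1) * B.length - B.length = e * B.length := by
        rw [harith]; omega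
      rw [this] at h2
      exact h2
    have hv' : (v.drop B.length).take (e * B.length)
        = (B ++ v.drop B.length).take (e * B.length) := by
      rw [hdrop, ← hvsplit]
    have hrec := ih B (v.drop B.length) hB hv'
    have hrep : (List.replicate (e + 1 + 1) B).flatten
        = B ++ (List.replicate (e + 1) B).flatten := by
      rw [List.replicate_succ, List.flatten_cons]
    rw [hrep]
    obtain ⟨t, ht⟩ := hrec
    refine ⟨t, ?_⟩
    rw [List.append_assoc, ht, ← hvsplit]

lemma main {W : List α} {n d : ℕ} (hn : 0 < n) (hd : 2 ≤ d) (m : ℕ) (q : ℕ → ℕ)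
    (hm : (n - 1) * (d - 1) < m)
    (hmono : ∀ i j, i < j → j < m → q i < q j)
    (hlen : ∀ i, i < m → q i < W.length)
    (hdec : ∀ i j, i < j → j < m → W.drop (q j) < W.drop (q i))
    (hnopow : ¬ ∃ u : List α, u ≠ [] ∧ (List.replicate d u).flatten <:+: W) :
    IsNDivisible n W := by
  have hd1 : 1 ≤ d - 1 := by omega
  -- window lemma
  have win : ∀ a, a + (d - 1) < m →
      W.drop (q (a + (d - 1))) < (W.drop (q a)).take (q (a + (d - 1)) - q a) := by
    intro a hb
    have hab : a < a + (d - 1) := by omega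
    have hqab : q a < q (a + (d - 1)) := hmono a _ hab hb
    have hvu : W.drop (q (a + (d - 1))) < W.drop (q a) := hdec a _ hab hb
    refine lt_take hvu (q (a + (d - 1)) - q a) ?_
    intro heq
    obtain ⟨i0, hi0mem, hi0min⟩ := Finset.exists_min_image (Finset.Ico a (a + (d - 1)))
      (fun i => q (i + 1) - q i) ⟨a, Finset.mem_Ico.mpr ⟨le_rfl, hab⟩⟩
    rw [Finset.mem_Ico] at hi0mem
    have hi0m : i0 + 1 < m := by omega
    have hqL : q i0 < q (i0 + 1) := hmono i0 (i0 + 1) (by omega) hi0m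
    have hL1 : 1 ≤ q (i0 + 1) - q i0 := by omega
    have hgaps : ∀ i, a ≤ i → i < a + (d - 1) → q i + (q (i0 + 1) - q i0) ≤ q (i + 1) := by
      intro i h1 h2
      have hmin := hi0min i (Finset.mem_Ico.mpr ⟨h1, h2⟩)
      have hqi : q i < q (i + 1) := hmono i (i + 1) (by omega) (by omega)
      omega
    have hgrow : ∀ j, j ≤ d - 1 → q a + j * (q (i0 + 1) - q i0) ≤ q (a + j) := by
      intro j
      induction j with
      | zero => simp
      | succ j ihj =>
        intro hj
        have h1 := ihj (by omega)
        have h2 := hgaps (a + j) (by omega) (by omega)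
        have h3 : a + j + 1 = a + (j + 1) := by omega
        rw [← h3]
        have h4 : (j + 1) * (q (i0 + 1) - q i0)
            = j * (q (i0 + 1) - q i0) + (q (i0 + 1) - q i0) := by ring
        omega
    have hKL : (d - 1) * (q (i0 + 1) - q i0) ≤ q (a + (d - 1)) - q a := by
      have := hgrow (d - 1) le_rfl
      omega
    -- squeeze: all intermediate tails agree with the first on the window
    have hsq : ∀ i, a ≤ i → i ≤ a + (d - 1) →
        (W.drop (q i)).take (q (a + (d - 1)) - q a)
          = (W.drop (q a)).take (q (a + (d - 1)) - q a) := by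
      intro i h1 h2
      rcases eq_or_lt_of_le h1 with rfl | h1'
      · rfl
      rcases eq_or_lt_of_le h2 with rfl | h2'
      · exact heq
      have hle1 : (W.drop (q i)).take (q (a + (d - 1)) - q a)
          ≤ (W.drop (q a)).take (q (a + (d - 1)) - q a) :=
        take_mono_lex _ (le_of_lt (hdec a i h1' (by omega)))
      have hle2 : (W.drop (q (a + (d - 1)))).take (q (a + (d - 1)) - q a)
          ≤ (W.drop (q i)).take (q (a + (d - 1)) - q a) :=
        take_mono_lex _ (le_of_lt (hdec i _ h2' hb))
      rw [heq] at hle2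
      exact le_antisymm hle1 hle2
    have hkey : (W.drop (q i0)).take (q (a + (d - 1)) - q a)
        = (W.drop (q (i0 + 1))).take (q (a + (d - 1)) - q a) := by
      rw [hsq i0 hi0mem.1 (by omega), hsq (i0 + 1) (by omega) (by omega)]
    have hWi1 := hlen (i0 + 1) hi0m
    have hBlen : ((W.drop (q i0)).take (q (i0 + 1) - q i0)).length = q (i0 + 1) - q i0 := by
      rw [List.length_take, List.length_drop]
      omega
    have hBne : (W.drop (q i0)).take (q (i0 + 1) - q i0) ≠ [] := by
      intro h0
      rw [h0] at hBlen
      simp at hBlen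
      omega
    have hsplit2 : W.drop (q i0)
        = (W.drop (q i0)).take (q (i0 + 1) - q i0) ++ W.drop (q (i0 + 1)) := by
      conv_lhs => rw [← List.take_append_drop (q (i0 + 1) - q i0) (W.drop (q i0))]
      rw [List.drop_drop]
      congr 2
      omega
    have hpow0 : (W.drop (q (i0 + 1))).take
          ((d - 1) * ((W.drop (q i0)).take (q (i0 + 1) - q i0)).length)
        = ((W.drop (q i0)).take (q (i0 + 1) - q i0) ++ W.drop (q (i0 + 1))).take
          ((d - 1) * ((W.drop (q i0)).take (q (i0 + 1) - q i0)).length) := by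
      rw [hBlen, ← hsplit2]
      have h1 := congrArg (List.take ((d - 1) * (q (i0 + 1) - q i0))) hkey
      rw [List.take_take, List.take_take] at h1
      have hmin : (d - 1) * (q (i0 + 1) - q i0) ⊓ (q (a + (d - 1)) - q a)
          = (d - 1) * (q (i0 + 1) - q i0) := by omega
      rw [hmin] at h1
      exact h1.symm
    have hpp := pow_prefix (d - 1) _ _ hBne hpow0
    rw [show d - 1 + 1 = d from by omega, ← hsplit2] at hpp
    exact hnopow ⟨_, hBne, hpp.isInfix.trans (List.drop_suffix (q i0) W).isInfix⟩
  -- build the chain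
  have build : ∀ k, 1 ≤ k → k ≤ n → ∃ us : List (List α), us.length = k ∧
      (∀ u ∈ us, u ≠ []) ∧ us.flatten = W.drop (q ((n - k) * (d - 1))) ∧
      us.Chain' (fun x y => y < x) ∧
      (∀ h ∈ us.head?, h ≤ W.drop (q ((n - k) * (d - 1)))) := by
    intro k
    induction k with
    | zero => omega
    | succ k ih =>
      intro _ hkn
      rcases Nat.eq_zero_or_pos k with rfl | hk1
      · have hym : (n - 0 - 1) * (d - 1) < m := by
          have h1 : (n - 0 - 1) * (d - 1) ≤ (n - 1) * (d - 1) :=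
            Nat.mul_le_mul_right _ (by omega)
          omega
        have hne : W.drop (q ((n - (0 + 1)) * (d - 1))) ≠ [] := by
          intro h0
          rw [List.drop_eq_nil_iff] at h0
          have := hlen ((n - (0 + 1)) * (d - 1)) (by
            have h1 : (n - (0 + 1)) * (d - 1) ≤ (n - 1) * (d - 1) :=
              Nat.mul_le_mul_right _ (by omega)
            omega)
          omega
        refine ⟨[W.drop (q ((n - (0 + 1)) * (d - 1)))], by simp, ?_, by simp, List.isChain_singleton _, ?_⟩
        · intro u hu
          rw [List.mem_cons] at hu
          rcases hu with rfl | hu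
          · exact hne
          · simp at hu
        · intro y hy
          simp at hy
          rw [← hy]
      · obtain ⟨us, hlen', hne', hflat, hchain, hhead⟩ := ih hk1 (by omega)
        have hstep : (n - k) * (d - 1) = (n - (k + 1)) * (d - 1) + (d - 1) := by
          have h1 : n - k = (n - (k + 1)) + 1 := by omega
          rw [h1, Nat.succ_mul]
        have hbm : (n - k) * (d - 1) < m := by
          have h1 : (n - k) * (d - 1) ≤ (n - 1) * (d - 1) :=
            Nat.mul_le_mul_right _ (by omega)
          omega
        have ham : (n - (k + 1)) * (d - 1) < m := by omega
        have hqab : q ((n - (k + 1)) * (d - 1)) < q ((n - k) * (d - 1)) :=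
          hmono _ _ (by omega) hbm
        have hWb := hlen _ hbm
        have hchunklen : ((W.drop (q ((n - (k + 1)) * (d - 1)))).take
            (q ((n - k) * (d - 1)) - q ((n - (k + 1)) * (d - 1)))).length
            = q ((n - k) * (d - 1)) - q ((n - (k + 1)) * (d - 1)) := by
          rw [List.length_take, List.length_drop]
          have := hlen _ ham
          omega
        have hchunkne : (W.drop (q ((n - (k + 1)) * (d - 1)))).take
            (q ((n - k) * (d - 1)) - q ((n - (k + 1)) * (d - 1))) ≠ [] := by
          intro h0
          rw [h0] at hchunklen
          simp at hchunklen
          omega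
        have hflat2 : (W.drop (q ((n - (k + 1)) * (d - 1)))).take
              (q ((n - k) * (d - 1)) - q ((n - (k + 1)) * (d - 1))) ++ us.flatten
            = W.drop (q ((n - (k + 1)) * (d - 1))) := by
          rw [hflat]
          have h2 : W.drop (q ((n - k) * (d - 1)))
              = List.drop (q ((n - k) * (d - 1)) - q ((n - (k + 1)) * (d - 1)))
                  (W.drop (q ((n - (k + 1)) * (d - 1)))) := by
            rw [List.drop_drop]
            congr 1
            omega
          rw [h2]
          exact List.take_append_drop _ _
        have hwin := win ((n - (k + 1)) * (d - 1)) (by omega)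
        rw [← hstep] at hwin
        refine ⟨(W.drop (q ((n - (k + 1)) * (d - 1)))).take
            (q ((n - k) * (d - 1)) - q ((n - (k + 1)) * (d - 1))) :: us,
          by simp [hlen'], ?_, ?_, ?_, ?_⟩
        · intro u hu
          rw [List.mem_cons] at hu
          rcases hu with rfl | hu
          · exact hchunkne
          · exact hne' u hu
        · rw [List.flatten_cons, hflat2]
        · refine List.isChain_cons.mpr ?_
          refine ⟨?_, hchain⟩
          intro y hy
          have h1 := hhead y hy
          exact lt_of_le_of_lt h1 hwin
        · intro y hy
          simp at hy
          rw [← hy]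
          exact prefix_le (List.take_prefix _ _)
  obtain ⟨us, h1, h2, h3, h4, _⟩ := build n hn le_rfl
  have h0 : (n - n) * (d - 1) = 0 := by
    rw [Nat.sub_self, Nat.zero_mul]
  rw [h0] at h3
  refine ⟨W.take (q 0), us, h1, h2, ?_, h4⟩
  rw [h3]
  exact (List.take_append_drop (q 0) W).symm

end Stmt3Aux

/-- Lemma: a `4nd`-divisible (in tail sense) word is `n`-divisible in the ordinary sense or
contains a `d`-th power; consequently a word that is not `n`-divisible in the ordinary sense
and contains no `d`-th power is not `4nd`-divisible in the tail sense. -/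
theorem stmt_3 {α : Type*} [Fintype α] [LinearOrder α] (n d : ℕ) (hn : 0 < n) (hd : 0 < d)
    (W : List α) :
    (IsTailNDivisible (4 * n * d) W →
      IsNDivisible n W ∨ ∃ u : List α, u ≠ [] ∧ (List.replicate d u).flatten <:+: W) ∧
    ((¬ IsNDivisible n W ∧ ¬ ∃ u : List α, u ≠ [] ∧ (List.replicate d u).flatten <:+: W) →
      ¬ IsTailNDivisible (4 * n * d) W) := by
  have H1 : IsTailNDivisible (4 * n * d) W →
      IsNDivisible n W ∨ ∃ u : List α, u ≠ [] ∧ (List.replicate d u).flatten <:+: W := by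
    rintro ⟨p, hsm, hlt, hdec⟩
    by_cases hpow : ∃ u : List α, u ≠ [] ∧ (List.replicate d u).flatten <:+: W
    · exact Or.inr hpow
    left
    have hmpos : 0 < 4 * n * d := Nat.mul_pos (Nat.mul_pos (by norm_num) hn) hd
    have hW : W ≠ [] := by
      have h1 := hlt ⟨0, hmpos⟩
      intro h0
      rw [h0] at h1
      simp at h1
    have hd2 : 2 ≤ d := by
      rcases Nat.lt_or_ge d 2 with h | h
      · exfalso
        apply hpow
        refine ⟨W, hW, ?_⟩
        have hd1 : d = 1 := by omega
        subst hd1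
        simpa using List.infix_rfl
      · exact h
    apply Stmt3Aux.main hn hd2 (4 * n * d)
      (fun i => if h : i < 4 * n * d then p ⟨i, h⟩ else 0)
    · have h1 : (n - 1) * (d - 1) ≤ n * d :=
        Nat.mul_le_mul (Nat.sub_le _ _) (Nat.sub_le _ _)
      have h2 : 0 < n * d := Nat.mul_pos hn hd
      have h3 : 4 * n * d = 4 * (n * d) := by ring
      omega
    · intro i j hij hj
      have hi : i < 4 * n * d := lt_trans hij hj
      rw [dif_pos hi, dif_pos hj]
      exact hsm (show (⟨i, hi⟩ : Fin (4 * n * d)) < ⟨j, hj⟩ from hij)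
    · intro i hi
      rw [dif_pos hi]
      exact hlt _
    · intro i j hij hj
      have hi : i < 4 * n * d := lt_trans hij hj
      rw [dif_pos hi, dif_pos hj]
      exact hdec ⟨i, hi⟩ ⟨j, hj⟩ hij
    · exact hpow
  exact ⟨H1, fun h ht => (H1 ht).elim h.1 h.2⟩
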